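/- Suppose η, χ : ℝ → ℝ are differentiable on [0,T] and satisfy η'(t) = 2(a+q)η(t) + (1 − 1/N²)η(t)² − (ε − q²) and χ'(t) = −½σ²(1−ρ²)(1 − 1/N)η(t) for t ∈ [0,T], with η(T) = c and χ(T) = 0. For i ∈ {1,…,N} define V^i(t,x) = (η(t)/2)(x̄ − x^i)² + χ(t) for x = (x^1,…,x^N) ∈ ℝ^N, where x̄ = (x^1+⋯+x^N)/N. Then for every i and every (t,x) ∈ [0,T] × ℝ^N, ∂_t V^i + Σ_{j=1}^N [(a+q)(x̄ − x^j) − ∂_{x^j}V^j] ∂_{x^j}V^i + (σ²/2) Σ_{j=1}^N Σ_{k=1}^N (ρ² + δ_{j,k}(1−ρ²)) ∂²_{x^j x^k} V^i + ½(ε − q²)(x̄ − x^i)² + ½(∂_{x^i}V^i)² = 0, and V^i(T,x) = (c/2)(x̄ − x^i)². -/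

import Mathlib

/-- The sample mean `x̄ = (x¹ + ⋯ + x^N)/N`. -/
noncomputable def xbar (N : ℕ) (x : Fin N → ℝ) : ℝ := (∑ j, x j) / N

/-- Partial derivative `∂_{x^j} F (x)` of a function `F : ℝ^N → ℝ`. -/
noncomputable def pderivX (N : ℕ) (j : Fin N) (F : (Fin N → ℝ) → ℝ)
    (x : Fin N → ℝ) : ℝ :=
  deriv (fun s => F (Function.update x j s)) (x j)


lemma hd0 (N : ℕ) (i j : Fin N) (x : Fin N → ℝ) :
    HasDerivAt (fun s => xbar N (Function.update x j s) - Function.update x j s i)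
      (1/(N:ℝ) - if i = j then 1 else 0) (x j) := by
  have hfun : (fun s => xbar N (Function.update x j s) - Function.update x j s i)
      = fun s => (s + ∑ k ∈ Finset.univ.erase j, x k)/(N:ℝ) - (if i = j then s else x i) := by
    funext s
    rw [xbar, Finset.sum_update_of_mem (Finset.mem_univ j), Function.update_apply]
    simp [Finset.sdiff_singleton_eq_erase]
  rw [hfun]
  by_cases h : i = j
  · simp only [h, if_pos rfl]
    exact (((hasDerivAt_id (x j)).add_const _).div_const _).sub (hasDerivAt_id (x j))
  · simp only [if_neg h]
    simpa using (((hasDerivAt_id (x j)).add_const _).div_const (N:ℝ)).sub_const (x i)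

lemma pd1 (N : ℕ) (i j : Fin N) (A B : ℝ) (x : Fin N → ℝ) :
    pderivX N j (fun y => A * (xbar N y - y i)^2 + B) x
      = 2 * A * (xbar N x - x i) * (1/(N:ℝ) - if i = j then 1 else 0) := by
  have h := (((hd0 N i j x).pow 2).const_mul A).add_const B
  have h2 := h.deriv
  rw [pderivX]
  simp only [Function.update_eq_self, Pi.pow_apply] at h2 ⊢
  rw [h2]; push_cast; ring

lemma pd2 (N : ℕ) (i j : Fin N) (A e : ℝ) (x : Fin N → ℝ) :
    pderivX N j (fun y => A * (xbar N y - y i) * e) x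
      = A * e * (1/(N:ℝ) - if i = j then 1 else 0) := by
  have h := (((hd0 N i j x).const_mul A).mul_const e)
  have h2 := h.deriv
  rw [pderivX]
  beta_reduce at h2 ⊢
  rw [h2]; push_cast; ring

lemma sumA (N : ℕ) (hN : (N:ℝ) ≠ 0) (x : Fin N → ℝ) : ∑ j, (xbar N x - x j) = 0 := by
  rw [Finset.sum_sub_distrib, Finset.sum_const, Finset.card_univ, Fintype.card_fin, xbar]
  rw [nsmul_eq_mul]
  field_simp
  ring

lemma sumD (N : ℕ) (hN : (N:ℝ) ≠ 0) (i : Fin N) (x : Fin N → ℝ) :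
    ∑ j, (xbar N x - x j) * (1/(N:ℝ) - if i = j then 1 else 0) = -(xbar N x - x i) := by
  have : ∀ j ∈ Finset.univ, (xbar N x - x j) * (1/(N:ℝ) - if i = j then 1 else 0)
      = (xbar N x - x j) * (1/(N:ℝ)) - (if i = j then (xbar N x - x j) else 0) := by
    intro j _; by_cases h : i = j <;> simp [h] <;> ring
  rw [Finset.sum_congr rfl this, Finset.sum_sub_distrib, ← Finset.sum_mul, sumA N hN,
    Finset.sum_ite_eq]
  simp

lemma sumB (N : ℕ) (hN : (N:ℝ) ≠ 0) (i : Fin N) :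
    ∑ j : Fin N, (1/(N:ℝ) - if i = j then 1 else 0) = 0 := by
  rw [Finset.sum_sub_distrib, Finset.sum_const, Finset.card_univ, Fintype.card_fin,
    Finset.sum_ite_eq]
  simp
  field_simp
  ring

lemma sumC (N : ℕ) (hN : (N:ℝ) ≠ 0) (i : Fin N) :
    ∑ j : Fin N, (1/(N:ℝ) - if i = j then 1 else 0)^2 = 1 - 1/(N:ℝ) := by
  have : ∀ j ∈ Finset.univ, ((1/(N:ℝ) - if i = j then 1 else 0))^2
      = 1/(N:ℝ)^2 - (if i = j then (2/(N:ℝ) - 1) else 0) := by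
    intro j _; by_cases h : i = j <;> simp [h] <;> ring
  rw [Finset.sum_congr rfl this, Finset.sum_sub_distrib, Finset.sum_const, Finset.card_univ,
    Fintype.card_fin, Finset.sum_ite_eq]
  simp
  field_simp
  ring

/-- If `η, χ` solve the system
`η'(t) = 2(a+q) η(t) + (1 − 1/N²) η(t)² − (ε − q²)`,
`χ'(t) = −½ σ² (1−ρ²) (1 − 1/N) η(t)` on `[0,T]` with `η(T) = c`, `χ(T) = 0`,
then `V^i(t,x) = (η(t)/2)(x̄ − x^i)² + χ(t)` solves the system of `N` coupled HJB
equations of the `N`-player game, with terminal condition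
`V^i(T,x) = (c/2)(x̄ − x^i)²`. -/
theorem statement_6 (T a q ε c σ ρ : ℝ) (N : ℕ) (hT : 0 < T) (hN : 1 ≤ N)
    (ha : 0 ≤ a) (hq : 0 ≤ q) (hc : 0 ≤ c) (hσ : 0 < σ) (hρ₁ : -1 ≤ ρ) (hρ₂ : ρ ≤ 1)
    (η χ : ℝ → ℝ)
    (hη : ∀ t ∈ Set.Icc (0 : ℝ) T,
      HasDerivAt η (2 * (a + q) * η t + (1 - 1 / (N : ℝ) ^ 2) * η t ^ 2 - (ε - q ^ 2)) t)
    (hχ : ∀ t ∈ Set.Icc (0 : ℝ) T,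
      HasDerivAt χ (-(1 / 2) * σ ^ 2 * (1 - ρ ^ 2) * (1 - 1 / (N : ℝ)) * η t) t)
    (hηT : η T = c) (hχT : χ T = 0)
    (V : Fin N → ℝ → (Fin N → ℝ) → ℝ)
    (hV : ∀ i t x, V i t x = η t / 2 * (xbar N x - x i) ^ 2 + χ t) :
    ∀ (i : Fin N), ∀ t ∈ Set.Icc (0 : ℝ) T, ∀ x : Fin N → ℝ,
      (deriv (fun s => V i s x) t
        + ∑ j, ((a + q) * (xbar N x - x j) - pderivX N j (V j t) x) * pderivX N j (V i t) x
        + σ ^ 2 / 2 * ∑ j, ∑ k,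
            (ρ ^ 2 + (if j = k then (1 : ℝ) else 0) * (1 - ρ ^ 2)) *
              pderivX N j (fun y => pderivX N k (V i t) y) x
        + 1 / 2 * (ε - q ^ 2) * (xbar N x - x i) ^ 2
        + 1 / 2 * (pderivX N i (V i t) x) ^ 2 = 0)
      ∧ V i T x = c / 2 * (xbar N x - x i) ^ 2 := by
  intro i t ht x
  have hn : (N:ℝ) ≠ 0 := Nat.cast_ne_zero.mpr (by omega)
  constructor
  · have hV' : ∀ j s, V j s = fun y => η s / 2 * (xbar N y - y j)^2 + χ s :=
      fun j s => funext fun y => hV j s y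
    have hdt : deriv (fun s => η s / 2 * (xbar N x - x i)^2 + χ s) t
        = (2 * (a + q) * η t + (1 - 1 / (N : ℝ) ^ 2) * η t ^ 2 - (ε - q ^ 2)) / 2
            * (xbar N x - x i)^2
          + (-(1 / 2) * σ ^ 2 * (1 - ρ ^ 2) * (1 - 1 / (N : ℝ)) * η t) :=
      ((((hη t ht).div_const 2).mul_const _).add (hχ t ht)).deriv
    simp only [hV', pd1, pd2, hdt, if_true]
    have hs1 : (∑ j, ((a + q) * (xbar N x - x j)
          - 2 * (η t / 2) * (xbar N x - x j) * (1 / (N:ℝ) - 1)) *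
        (2 * (η t / 2) * (xbar N x - x i) * (1 / (N:ℝ) - if i = j then 1 else 0)))
        = (((a + q) - η t * (1/(N:ℝ) - 1)) * (η t * (xbar N x - x i))) * (-(xbar N x - x i)) := by
      have e : ∀ j ∈ Finset.univ, ((a + q) * (xbar N x - x j)
            - 2 * (η t / 2) * (xbar N x - x j) * (1 / (N:ℝ) - 1)) *
          (2 * (η t / 2) * (xbar N x - x i) * (1 / (N:ℝ) - if i = j then 1 else 0))
          = (((a + q) - η t * (1/(N:ℝ) - 1)) * (η t * (xbar N x - x i)))
              * ((xbar N x - x j) * (1 / (N:ℝ) - if i = j then 1 else 0)) := by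
        intro j _; ring
      rw [Finset.sum_congr rfl e, ← Finset.mul_sum, sumD N hn i x]
    have inner : ∀ j : Fin N, (∑ k, (ρ ^ 2 + (if j = k then (1:ℝ) else 0) * (1 - ρ ^ 2)) *
          (2 * (η t / 2) * (1 / (N:ℝ) - if i = k then 1 else 0)
            * (1 / (N:ℝ) - if i = j then 1 else 0)))
        = ((1 - ρ^2) * η t) * (1 / (N:ℝ) - if i = j then 1 else 0)^2 := by
      intro j
      have e : ∀ k ∈ Finset.univ, (ρ ^ 2 + (if j = k then (1:ℝ) else 0) * (1 - ρ ^ 2)) *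
            (2 * (η t / 2) * (1 / (N:ℝ) - if i = k then 1 else 0)
              * (1 / (N:ℝ) - if i = j then 1 else 0))
          = (ρ^2 * η t * (1 / (N:ℝ) - if i = j then 1 else 0))
              * (1 / (N:ℝ) - if i = k then 1 else 0)
            + (if j = k then ((1 - ρ^2) * η t * (1 / (N:ℝ) - if i = j then 1 else 0)
                * (1 / (N:ℝ) - if i = k then 1 else 0)) else 0) := by
        intro k _; by_cases h : j = k <;> simp [h] <;> ring
      rw [Finset.sum_congr rfl e, Finset.sum_add_distrib, ← Finset.mul_sum, sumB N hn i,
        Finset.sum_ite_eq]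
      simp; ring
    have hs2 : (∑ j, ∑ k, (ρ ^ 2 + (if j = k then (1:ℝ) else 0) * (1 - ρ ^ 2)) *
          (2 * (η t / 2) * (1 / (N:ℝ) - if i = k then 1 else 0)
            * (1 / (N:ℝ) - if i = j then 1 else 0)))
        = ((1 - ρ^2) * η t) * (1 - 1/(N:ℝ)) := by
      rw [Finset.sum_congr rfl (fun j _ => inner j), ← Finset.mul_sum, sumC N hn i]
    rw [hs1, hs2]
    field_simp
    ring
  · rw [hV, hηT, hχT]; ring
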